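/- Assume 0 ≤ p₁ ≤ 1, 0 ≤ p₂ ≤ 1, and |p₂ - p₁| < 1. Then the expected capture fraction converges at rate O(1/n): for every n ≥ 1, |(1/n) * ∑_{i=0}^{n-1} (p₁ * (η i 0) + p₂ * (η i 1)) - p₁ / (1 + p₁ - p₂)| ≤ 2 * p₁ * |p₂ - p₁| / (n * (1 + p₁ - p₂)^2). -/

import Mathlib

open Matrix Filter

/-- Transition matrix of the two-state Markov chain:
row 0 = (1 - p₁, 1 - p₂), row 1 = (p₁, p₂). -/
def M (p₁ p₂ : ℝ) : Matrix (Fin 2) (Fin 2) ℝ := !![1 - p₁, 1 - p₂; p₁, p₂]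

/-- Initial distribution: defender at the target center. -/
def e₁ : Fin 2 → ℝ := ![1, 0]

/-- Distribution of the chain after `n` games when started in `S₁`. -/
def η (p₁ p₂ : ℝ) (n : ℕ) : Fin 2 → ℝ := (M p₁ p₂ ^ n) *ᵥ e₁

lemma eta_succ (p₁ p₂ : ℝ) (i : ℕ) :
    η p₁ p₂ (i + 1) = M p₁ p₂ *ᵥ η p₁ p₂ i := by
  simp only [η, pow_succ', Matrix.mulVec_mulVec]

lemma eta_closed (p₁ p₂ : ℝ) (hd : 1 + p₁ - p₂ ≠ 0) (i : ℕ) :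
    η p₁ p₂ i 0 = (1 - p₂) / (1 + p₁ - p₂) + (p₁ / (1 + p₁ - p₂)) * (p₂ - p₁) ^ i ∧
    η p₁ p₂ i 1 = p₁ / (1 + p₁ - p₂) - (p₁ / (1 + p₁ - p₂)) * (p₂ - p₁) ^ i := by
  induction i with
  | zero =>
    refine ⟨?_, by simp [η, e₁]⟩
    simp [η, e₁]
    field_simp
    ring
  | succ i ih =>
    obtain ⟨ih0, ih1⟩ := ih
    have h0 : η p₁ p₂ (i + 1) 0 = (1 - p₁) * η p₁ p₂ i 0 + (1 - p₂) * η p₁ p₂ i 1 := by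
      rw [eta_succ]
      simp [M, Matrix.mulVec, dotProduct, Fin.sum_univ_two]
    have h1 : η p₁ p₂ (i + 1) 1 = p₁ * η p₁ p₂ i 0 + p₂ * η p₁ p₂ i 1 := by
      rw [eta_succ]
      simp [M, Matrix.mulVec, dotProduct, Fin.sum_univ_two]
    constructor
    · rw [h0, ih0, ih1]
      field_simp
      ring
    · rw [h1, ih0, ih1]
      field_simp
      ring

theorem capture_fraction_rate (p₁ p₂ : ℝ) (h₁ : 0 ≤ p₁) (h₁' : p₁ ≤ 1)
    (h₂ : 0 ≤ p₂) (h₂' : p₂ ≤ 1) (h : |p₂ - p₁| < 1) (n : ℕ) (hn : 1 ≤ n) :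
    |(1 / (n : ℝ)) * (∑ i ∈ Finset.range n, (p₁ * η p₁ p₂ i 0 + p₂ * η p₁ p₂ i 1)) -
        p₁ / (1 + p₁ - p₂)| ≤
      2 * p₁ * |p₂ - p₁| / (n * (1 + p₁ - p₂) ^ 2) := by
  have hd0 : (0:ℝ) < 1 + p₁ - p₂ := by
    have := abs_lt.1 h
    linarith [this.2]
  have hd : 1 + p₁ - p₂ ≠ 0 := ne_of_gt hd0
  have hterm : ∀ i, p₁ * η p₁ p₂ i 0 + p₂ * η p₁ p₂ i 1
      = p₁ / (1 + p₁ - p₂) - (p₁ * (p₂ - p₁) / (1 + p₁ - p₂)) * (p₂ - p₁) ^ i := by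
    intro i
    obtain ⟨e0, e1⟩ := eta_closed p₁ p₂ hd i
    rw [e0, e1]
    field_simp
    ring
  set r : ℝ := p₂ - p₁ with hr
  set d : ℝ := 1 + p₁ - p₂ with hdd
  clear_value r d
  have hrne : r ≠ 1 := by
    intro hc
    rw [hc] at h
    simp at h
  have hrne' : r - 1 ≠ 0 := sub_ne_zero.2 hrne
  have hsum : (∑ i ∈ Finset.range n, (p₁ * η p₁ p₂ i 0 + p₂ * η p₁ p₂ i 1))
      = n * (p₁ / d) - (p₁ * r / d) * ((r ^ n - 1) / (r - 1)) := by
    simp only [hterm]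
    rw [Finset.sum_sub_distrib, Finset.sum_const, ← Finset.mul_sum, geom_sum_eq hrne]
    simp [mul_comm]
  have hn0 : (0:ℝ) < n := by exact_mod_cast hn
  have hLHS : (1 / (n : ℝ)) * (∑ i ∈ Finset.range n, (p₁ * η p₁ p₂ i 0 + p₂ * η p₁ p₂ i 1)) -
      p₁ / d = -(p₁ * r / (n * d)) * ((r ^ n - 1) / (r - 1)) := by
    rw [hsum]
    field_simp
    ring
  rw [hLHS]
  have hr1 : r - 1 = -d := by rw [hdd, hr]; ring
  have habs : |(-(p₁ * r / (n * d)) * ((r ^ n - 1) / (r - 1)))|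
      = p₁ * |r| / (n * d) * (|r ^ n - 1| / d) := by
    rw [abs_mul, abs_neg, abs_div, abs_div, hr1, abs_neg,
      abs_of_pos hd0, abs_mul, abs_of_nonneg h₁,
      abs_of_pos (mul_pos hn0 hd0)]
  rw [habs]
  have hbound : |r ^ n - 1| ≤ 2 := by
    have h1 : |r ^ n| ≤ 1 := by
      rw [abs_pow]
      exact pow_le_one₀ (abs_nonneg r) h.le
    calc |r ^ n - 1| ≤ |r ^ n| + 1 := by
          simpa using abs_sub (r ^ n) 1
      _ ≤ 2 := by linarith
  have hk : 0 ≤ p₁ * |r| / (n * d) := by positivity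
  calc p₁ * |r| / (n * d) * (|r ^ n - 1| / d)
      ≤ p₁ * |r| / (n * d) * (2 / d) := by
        gcongr
    _ = 2 * p₁ * |r| / (n * d ^ 2) := by field_simp
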